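/- Let w be a weight structure on a triangulated category C and M an object of C. The following are equivalent: (i) M ∈ C_{w≥0}; (ii) H(M) = 0 for every cohomological functor H : C^op → Ab of weight range ≤ -1; (iv) (τ_{≤-1}H_M)(M) = 0, where H_M = Hom(−, M). -/

import Mathlib

open CategoryTheory Category Limits Pretriangulated ZeroObject Opposite

universe v u u₂ v₂

variable (C : Type u) [Category.{v} C] [Preadditive C] [HasZeroObject C]
  [HasShift C ℤ] [∀ n : ℤ, (CategoryTheory.shiftFunctor C n).Additive] [Pretriangulated C]

/-- `X` is a retract (direct summand) of `Y`. -/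
def IsRetract {C : Type u} [Category.{v} C] (X Y : C) : Prop :=
  ∃ (s : X ⟶ Y) (r : Y ⟶ X), s ≫ r = 𝟙 X

/-- A weight structure on a pretriangulated category `C`, in the homological convention:
`le` is the class `C_{w≤0}` and `ge` is the class `C_{w≥0}`. -/
structure WeightStructure where
  le : Set C
  ge : Set C
  le_retract : ∀ ⦃X Y : C⦄, IsRetract X Y → Y ∈ le → X ∈ le
  ge_retract : ∀ ⦃X Y : C⦄, IsRetract X Y → Y ∈ ge → X ∈ ge
  le_shift : ∀ X : C, X ∈ le → X⟦(-1 : ℤ)⟧ ∈ le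
  ge_shift : ∀ X : C, X ∈ ge → X⟦(1 : ℤ)⟧ ∈ ge
  orth : ∀ ⦃X Y : C⦄, X ∈ le → Y ∈ ge → ∀ f : X ⟶ Y⟦(1 : ℤ)⟧, f = 0
  decomp : ∀ M : C, ∃ (L R : C) (f : L ⟶ M) (g : M ⟶ R) (h : R ⟶ L⟦(1 : ℤ)⟧),
    Triangle.mk f g h ∈ (distTriang C) ∧ L ∈ le ∧ R⟦(-1 : ℤ)⟧ ∈ ge

/-- A t-structure on a pretriangulated category `C`, in the homological convention:
`le` is the class `C_{t≤0}` and `ge` is the class `C_{t≥0}`. -/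
structure HomTStructure where
  le : Set C
  ge : Set C
  le_iso : ∀ ⦃X Y : C⦄, (X ≅ Y) → Y ∈ le → X ∈ le
  ge_iso : ∀ ⦃X Y : C⦄, (X ≅ Y) → Y ∈ ge → X ∈ ge
  le_shift : ∀ X : C, X ∈ le → X⟦(-1 : ℤ)⟧ ∈ le
  ge_shift : ∀ X : C, X ∈ ge → X⟦(1 : ℤ)⟧ ∈ ge
  orth : ∀ ⦃X Y : C⦄, X⟦(-1 : ℤ)⟧ ∈ ge → Y ∈ le → ∀ f : X ⟶ Y, f = 0
  decomp : ∀ M : C, ∃ (L R : C) (f : L ⟶ M) (g : M ⟶ R) (h : R ⟶ L⟦(1 : ℤ)⟧),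
    Triangle.mk f g h ∈ (distTriang C) ∧ L ∈ ge ∧ R⟦(1 : ℤ)⟧ ∈ le

/-- A contravariant additive functor is cohomological if it sends distinguished
triangles to exact sequences. -/
def IsCohomological {A : Type u₂} [Category.{v₂} A] [Abelian A]
    (H : Cᵒᵖ ⥤ A) [H.Additive] : Prop :=
  ∀ (T : Triangle C), ∀ hT : T ∈ distTriang C,
    (ShortComplex.mk (H.map T.mor₂.op) (H.map T.mor₁.op) (by
      rw [← H.map_comp, ← op_comp, comp_distTriang_mor_zero₁₂ _ hT, op_zero, H.map_zero])).Exact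

namespace WSAux
variable {C}
variable (w : WeightStructure C)

lemma le_iso {X Y : C} (i : X ≅ Y) (h : Y ∈ w.le) : X ∈ w.le :=
  w.le_retract ⟨i.hom, i.inv, i.hom_inv_id⟩ h

lemma ge_iso {X Y : C} (i : X ≅ Y) (h : Y ∈ w.ge) : X ∈ w.ge :=
  w.ge_retract ⟨i.hom, i.inv, i.hom_inv_id⟩ h

lemma le_of_shift {X : C} (h : X⟦(1 : ℤ)⟧ ∈ w.le) : X ∈ w.le :=
  le_iso w (shiftShiftNeg X (1 : ℤ)).symm (w.le_shift _ h)

lemma hom_zero₁ {X Y : C} (hX : X⟦(1 : ℤ)⟧ ∈ w.le) (hY : Y ∈ w.ge) (f : X ⟶ Y) : f = 0 := by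
  have h := w.orth hX hY ((shiftFunctor C (1 : ℤ)).map f)
  apply (shiftFunctor C (1 : ℤ)).map_injective
  simpa using h

lemma hom_zero₀ {X Y : C} (hX : X ∈ w.le) (hY : Y⟦(-1 : ℤ)⟧ ∈ w.ge) (f : X ⟶ Y) : f = 0 := by
  have h := w.orth hX hY (f ≫ (shiftNegShift Y (1 : ℤ)).inv)
  rw [← cancel_mono (shiftNegShift Y (1 : ℤ)).inv, zero_comp]
  exact h

lemma retract_of_mor₁_zero (T : Triangle C) (hT : T ∈ distTriang C) (h : T.mor₁ = 0) :
    IsRetract T.obj₂ T.obj₃ := by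
  obtain ⟨r, hr⟩ := Triangle.yoneda_exact₂ T hT (𝟙 T.obj₂) (by rw [h, zero_comp])
  exact ⟨T.mor₂, r, hr.symm⟩

lemma le_ext (T : Triangle C) (hT : T ∈ distTriang C) (h₁ : T.obj₁ ∈ w.le)
    (h₃ : T.obj₃ ∈ w.le) : T.obj₂ ∈ w.le := by
  obtain ⟨P, Q, a, b, c, hdist, hP, hQ⟩ := w.decomp T.obj₂
  have h1 : T.mor₁ ≫ b = 0 := hom_zero₀ w h₁ hQ _
  obtain ⟨b', hb'⟩ := Triangle.yoneda_exact₂ T hT b h1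
  have hb0 : b = 0 := by rw [hb', hom_zero₀ w h₃ hQ b', comp_zero]
  obtain ⟨r, hr⟩ := Triangle.coyoneda_exact₂ _ hdist (𝟙 T.obj₂)
    (by simp [hb0]; exact comp_zero)
  exact w.le_retract ⟨r, a, hr.symm⟩ hP

lemma dist_of_iso₂ {X Y Z N : C} (f : X ⟶ Y) (g : Y ⟶ Z) (h : Z ⟶ X⟦(1:ℤ)⟧)
    (hT : Triangle.mk f g h ∈ distTriang C) (i : Y ≅ N) :
    Triangle.mk (f ≫ i.hom) (i.inv ≫ g) h ∈ distTriang C := by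
  refine isomorphic_distinguished _ hT _ ?_
  exact Triangle.isoMk _ _ (Iso.refl _) i.symm (Iso.refl _)
    (by exact (by simp : (f ≫ i.hom) ≫ i.inv = f).trans (id_comp f).symm) (by exact comp_id _)
    (by exact (by simp : h ≫ (shiftFunctor C (1 : ℤ)).map (𝟙 X) = h).trans (id_comp h).symm)


end WSAux

/-- A pair of weight decompositions of `N`, at levels `0` and `-1`, connected by a
morphism `e`. -/
structure WDecomp {C : Type u} [Category.{v} C] [Preadditive C] [HasZeroObject C]
    [HasShift C ℤ] [∀ n : ℤ, (CategoryTheory.shiftFunctor C n).Additive] [Pretriangulated C]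
    (w : WeightStructure C) (N : C) where
  P₁ : C
  Q₁ : C
  a₁ : P₁ ⟶ N
  b₁ : N ⟶ Q₁
  c₁ : Q₁ ⟶ P₁⟦(1 : ℤ)⟧
  dist₁ : Triangle.mk a₁ b₁ c₁ ∈ distTriang C
  hP₁ : P₁⟦(1 : ℤ)⟧ ∈ w.le
  hQ₁ : Q₁ ∈ w.ge
  P₀ : C
  Q₀ : C
  a₀ : P₀ ⟶ N
  b₀ : N ⟶ Q₀
  c₀ : Q₀ ⟶ P₀⟦(1 : ℤ)⟧
  dist₀ : Triangle.mk a₀ b₀ c₀ ∈ distTriang C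
  hP₀ : P₀ ∈ w.le
  hQ₀ : Q₀⟦(-1 : ℤ)⟧ ∈ w.ge
  e : P₁ ⟶ P₀
  he : e ≫ a₀ = a₁

namespace WSAux
variable {C : Type u} [Category.{v} C] [Preadditive C] [HasZeroObject C]
  [HasShift C ℤ] [∀ n : ℤ, (CategoryTheory.shiftFunctor C n).Additive] [Pretriangulated C]
variable (w : WeightStructure C)

lemma wdecomp_exists (N : C) : Nonempty (WDecomp w N) := by
  obtain ⟨P₀, Q₀, a₀, b₀, c₀, d₀, hP₀, hQ₀⟩ := w.decomp N
  obtain ⟨L, R, f, g, h, hd, hL, hR⟩ := w.decomp (N⟦(1 : ℤ)⟧)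
  have hsh := Pretriangulated.Triangle.shift_distinguished _ hd (-1)
  set Tsh := (CategoryTheory.shiftFunctor (Triangle C) (-1 : ℤ)).obj (Triangle.mk f g h)
    with hTsh
  have hobj₁ : Tsh.obj₁ = L⟦(-1 : ℤ)⟧ := rfl
  have hobj₂ : Tsh.obj₂ = (N⟦(1 : ℤ)⟧)⟦(-1 : ℤ)⟧ := rfl
  have hobj₃ : Tsh.obj₃ = R⟦(-1 : ℤ)⟧ := rfl
  let i : Tsh.obj₂ ≅ N := shiftShiftNeg N (1 : ℤ)
  have hdist₁ : Triangle.mk (Tsh.mor₁ ≫ i.hom) (i.inv ≫ Tsh.mor₂) Tsh.mor₃ ∈ distTriang C := by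
    have := dist_of_iso₂ Tsh.mor₁ Tsh.mor₂ Tsh.mor₃ ?_ i
    · exact this
    · exact isomorphic_distinguished _ hsh _ (Iso.refl _)
  have hP₁ : (Tsh.obj₁)⟦(1 : ℤ)⟧ ∈ w.le := le_iso w (shiftNegShift L (1 : ℤ)) hL
  have hQ₁ : Tsh.obj₃ ∈ w.ge := hR
  -- the connecting morphism e
  have hab : (Tsh.mor₁ ≫ i.hom) ≫ b₀ = 0 :=
    hom_zero₀ w (le_of_shift w hP₁) hQ₀ _
  obtain ⟨e, he⟩ := Triangle.coyoneda_exact₂ _ d₀ (Tsh.mor₁ ≫ i.hom) hab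
  exact ⟨{ P₁ := Tsh.obj₁, Q₁ := Tsh.obj₃, a₁ := Tsh.mor₁ ≫ i.hom, b₁ := i.inv ≫ Tsh.mor₂,
           c₁ := Tsh.mor₃, dist₁ := hdist₁, hP₁ := hP₁, hQ₁ := hQ₁,
           P₀ := P₀, Q₀ := Q₀, a₀ := a₀, b₀ := b₀, c₀ := c₀, dist₀ := d₀, hP₀ := hP₀,
           hQ₀ := hQ₀, e := e, he := he.symm }⟩


section Main
variable (d : ∀ N : C, WDecomp w N) (M : C)

lemma cancel₀ {N R : C} (hR : R⟦(1 : ℤ)⟧ ∈ w.le) (δ : R ⟶ (d N).P₀)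
    (h : δ ≫ (d N).a₀ = 0) : δ = 0 := by
  obtain ⟨q, hq⟩ := Triangle.coyoneda_exact₂ _ (inv_rot_of_distTriang _ (d N).dist₀) δ h
  rw [hq, hom_zero₁ w hR (d N).hQ₀ q]; exact zero_comp

lemma keyL {N R : C} (hR : R⟦(1 : ℤ)⟧ ∈ w.le) (l : R ⟶ (d N).P₁)
    (hl : l ≫ (d N).a₁ = 0) : l ≫ (d N).e = 0 :=
  cancel₀ w d hR _ (by rw [assoc, (d N).he, hl])

/-- the (pointwise) virtual truncation `τ_{≤ -1}(Hom(-,M))`: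
the image of `Hom(P₀ N, M) → Hom(P₁ N, M)`. -/
def SS (N : C) : AddSubgroup ((d N).P₁ ⟶ M) where
  carrier := Set.range (fun s : ((d N).P₀ ⟶ M) => (d N).e ≫ s)
  zero_mem' := ⟨0, comp_zero⟩
  add_mem' := by rintro x y ⟨s, rfl⟩ ⟨t, rfl⟩; exact ⟨s + t, by simp⟩
  neg_mem' := by rintro x ⟨s, rfl⟩; exact ⟨-s, by simp⟩

lemma keyL' {N R : C} (hR : R⟦(1 : ℤ)⟧ ∈ w.le) (l : R ⟶ (d N).P₁)
    (hl : l ≫ (d N).a₁ = 0) {x : (d N).P₁ ⟶ M} (hx : x ∈ SS w d M N) : l ≫ x = 0 := by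
  obtain ⟨s, rfl⟩ := hx
  rw [← assoc, keyL w d hR l hl, zero_comp]

lemma lift_unique_on {N N' : C} (l l' : (d N).P₁ ⟶ (d N').P₁)
    (h : l ≫ (d N').a₁ = l' ≫ (d N').a₁) {x : (d N').P₁ ⟶ M} (hx : x ∈ SS w d M N') :
    l ≫ x = l' ≫ x := by
  have h0 := keyL' w d M (d N).hP₁ (l - l')
    (by rw [Preadditive.sub_comp, h, sub_self]) hx
  rw [Preadditive.sub_comp] at h0
  exact sub_eq_zero.mp h0

lemma lift₁ {N N' : C} (φ : N ⟶ N') :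
    ∃ l : (d N).P₁ ⟶ (d N').P₁, l ≫ (d N').a₁ = (d N).a₁ ≫ φ := by
  obtain ⟨l, hl⟩ := Triangle.coyoneda_exact₂ _ (d N').dist₁ ((d N).a₁ ≫ φ)
    (hom_zero₁ w (d N).hP₁ (d N').hQ₁ _)
  exact ⟨l, hl.symm⟩

lemma lift₀ {N N' : C} (φ : N ⟶ N') :
    ∃ l : (d N).P₀ ⟶ (d N').P₀, l ≫ (d N').a₀ = (d N).a₀ ≫ φ := by
  obtain ⟨l, hl⟩ := Triangle.coyoneda_exact₂ _ (d N').dist₀ ((d N).a₀ ≫ φ)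
    (hom_zero₀ w (d N).hP₀ (d N').hQ₀ _)
  exact ⟨l, hl.symm⟩

lemma lift_comm {N N' : C} (φ : N ⟶ N') (l : (d N).P₁ ⟶ (d N').P₁)
    (hl : l ≫ (d N').a₁ = (d N).a₁ ≫ φ) (l₀ : (d N).P₀ ⟶ (d N').P₀)
    (hl₀ : l₀ ≫ (d N').a₀ = (d N).a₀ ≫ φ) : l ≫ (d N').e = (d N).e ≫ l₀ := by
  have h : (l ≫ (d N').e - (d N).e ≫ l₀) ≫ (d N').a₀ = 0 := by
    rw [Preadditive.sub_comp, assoc, assoc, (d N').he, hl, hl₀, ← assoc, (d N).he, sub_self]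
  exact sub_eq_zero.mp (cancel₀ w d (d N).hP₁ _ h)

lemma maps_into {N N' : C} (φ : N ⟶ N') (l : (d N).P₁ ⟶ (d N').P₁)
    (hl : l ≫ (d N').a₁ = (d N).a₁ ≫ φ) {x : (d N').P₁ ⟶ M} (hx : x ∈ SS w d M N') :
    l ≫ x ∈ SS w d M N := by
  obtain ⟨l₀, hl₀⟩ := lift₀ w d φ
  obtain ⟨s, rfl⟩ := hx
  refine ⟨l₀ ≫ s, ?_⟩
  show (d N).e ≫ (l₀ ≫ s) = l ≫ ((d N').e ≫ s)
  rw [← assoc, ← lift_comm w d φ l hl l₀ hl₀, assoc]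

/-- the virtual truncation `τ_{≤ -1}(Hom(-,M))` as a functor -/
noncomputable def TT : Cᵒᵖ ⥤ AddCommGrpCat.{v} where
  obj N := AddCommGrpCat.of (SS w d M (unop N))
  map {X Y} φ := AddCommGrpCat.ofHom
    { toFun := fun x => ⟨(lift₁ w d φ.unop).choose ≫ x.1,
        maps_into w d M φ.unop _ (lift₁ w d φ.unop).choose_spec x.2⟩
      map_zero' := Subtype.ext (by simp)
      map_add' := fun x y => Subtype.ext (by simp) }
  map_id X := by
    ext x
    show (lift₁ w d (𝟙 (unop X))).choose ≫ x.1 = x.1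
    have h := lift_unique_on w d M (lift₁ w d (𝟙 (unop X))).choose (𝟙 _)
      (by simpa using (lift₁ w d (𝟙 (unop X))).choose_spec) x.2
    simpa using h
  map_comp {X Y Z} φ ψ := by
    ext x
    show (lift₁ w d (φ ≫ ψ).unop).choose ≫ x.1
      = (lift₁ w d ψ.unop).choose ≫ ((lift₁ w d φ.unop).choose ≫ x.1)
    rw [← assoc]
    refine lift_unique_on w d M _ _ ?_ x.2
    rw [(lift₁ w d (φ ≫ ψ).unop).choose_spec, assoc,
      (lift₁ w d φ.unop).choose_spec, ← assoc, (lift₁ w d ψ.unop).choose_spec,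
      assoc]
    rfl

instance : (TT w d M).Additive := by
  constructor
  intro X Y f g
  ext x
  refine Subtype.ext ?_
  show (lift₁ w d (f + g).unop).choose ≫ x.1
    = ((lift₁ w d f.unop).choose ≫ x.1) + ((lift₁ w d g.unop).choose ≫ x.1)
  rw [← Preadditive.add_comp]
  refine lift_unique_on w d M _ _ ?_ x.2
  rw [(lift₁ w d (f + g).unop).choose_spec, Preadditive.add_comp,
    (lift₁ w d f.unop).choose_spec, (lift₁ w d g.unop).choose_spec,
    ← Preadditive.comp_add]
  congr 1

lemma e_zero_of_ge {N : C} (hN : N ∈ w.ge) : (d N).e = 0 := by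
  have h1 : (d N).a₁ = 0 := hom_zero₁ w (d N).hP₁ hN _
  have h := keyL w d (d N).hP₁ (𝟙 _) (by rw [id_comp, h1])
  simpa using h

lemma TT_vanish {N : C} (hN : N ∈ w.ge) : IsZero ((TT w d M).obj (op N)) := by
  refine @AddCommGrpCat.isZero_of_subsingleton _ ?_
  constructor
  rintro ⟨x, s, rfl⟩ ⟨y, t, rfl⟩
  refine Subtype.ext ?_
  show (d N).e ≫ s = (d N).e ≫ t
  rw [e_zero_of_ge w d hN, zero_comp, zero_comp]


lemma TT_map_apply {N N' : C} (φ : N ⟶ N') (x : (SS w d M N')) :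
    ((TT w d M).map φ.op x).1 = (lift₁ w d φ).choose ≫ x.1 := rfl

lemma TT_cohomological : IsCohomological C (TT w d M) := by
  intro T hT
  rw [ShortComplex.ab_exact_iff]
  intro x hx
  -- `x : SS (T.obj₂)` with `lift₁(mor₁) ≫ x = 0`; we must lift it to `SS (T.obj₃)`.
  have hx1 : (lift₁ w d T.mor₁).choose ≫ x.1 = 0 := by
    have := congrArg Subtype.val hx
    exact this
  obtain ⟨s, hs⟩ := x.2
  -- hs : (d T.obj₂).e ≫ s = x.1
  have hlg' := (lift₁ w d T.mor₂).choose_spec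
  set lg := (lift₁ w d T.mor₂).choose with hlgdef
  have hlf' := (lift₁ w d T.mor₁).choose_spec
  set lf := (lift₁ w d T.mor₁).choose with hlfdef
  obtain ⟨lf₀, hlf₀⟩ := lift₀ w d T.mor₁
  set m := lg ≫ (d T.obj₃).e with hmdef
  have hma : m ≫ (d T.obj₃).a₀ = (d T.obj₂).a₁ ≫ T.mor₂ := by
    rw [hmdef, assoc, (d T.obj₃).he, hlg']
  obtain ⟨Cm, u, v, hCm⟩ := distinguished_cocone_triangle m
  have hCmle : Cm ∈ w.le := by
    refine le_ext w _ (rot_of_distTriang _ hCm) ?_ ?_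
    · exact (d T.obj₃).hP₀
    · exact (d T.obj₂).hP₁
  have hTCi := inv_rot_of_distTriang _ hCm
  set w' : Cm⟦(-1 : ℤ)⟧ ⟶ (d T.obj₂).P₁ := (Triangle.mk m u v).invRotate.mor₁ with hw'def
  have hCm1 : (Cm⟦(-1 : ℤ)⟧)⟦(1 : ℤ)⟧ ∈ w.le := le_iso w (shiftNegShift Cm (1 : ℤ)) hCmle
  have hw'm : w' ≫ m = 0 := comp_distTriang_mor_zero₁₂ _ hTCi
  have hng : (w' ≫ (d T.obj₂).a₁) ≫ T.mor₂ = 0 := by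
    rw [assoc, ← hma, ← assoc, hw'm, zero_comp]
  obtain ⟨n, hn⟩ := Triangle.coyoneda_exact₂ T hT (w' ≫ (d T.obj₂).a₁) hng
  have hnb : n ≫ (d T.obj₁).b₁ = 0 := hom_zero₁ w hCm1 (d T.obj₁).hQ₁ _
  obtain ⟨k, hk⟩ : ∃ k : Cm⟦(-1 : ℤ)⟧ ⟶ (d T.obj₁).P₁, n = k ≫ (d T.obj₁).a₁ :=
    Triangle.coyoneda_exact₂ _ (d T.obj₁).dist₁ n hnb
  have hcomm : lf ≫ (d T.obj₂).e = (d T.obj₁).e ≫ lf₀ :=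
    lift_comm w d T.mor₁ lf hlf' lf₀ hlf₀
  have hδ : (w' ≫ (d T.obj₂).e - k ≫ ((d T.obj₁).e ≫ lf₀)) ≫ (d T.obj₂).a₀ = 0 := by
    rw [Preadditive.sub_comp, assoc, (d T.obj₂).he]
    have h2 : (k ≫ ((d T.obj₁).e ≫ lf₀)) ≫ (d T.obj₂).a₀ = n ≫ T.mor₁ := by
      rw [hk]
      show (k ≫ ((d T.obj₁).e ≫ lf₀)) ≫ (d T.obj₂).a₀ = (k ≫ (d T.obj₁).a₁) ≫ T.mor₁
      rw [assoc, assoc, hlf₀, ← (d T.obj₁).he]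
      simp only [assoc]
    rw [h2, hn, sub_self]
  have hδ0 : w' ≫ (d T.obj₂).e = k ≫ ((d T.obj₁).e ≫ lf₀) :=
    sub_eq_zero.mp (cancel₀ w d hCm1 _ hδ)
  have hs' : (d T.obj₂).e ≫ s = x.1 := hs
  have hwx : w' ≫ x.1 = 0 := by
    rw [← hs', ← assoc, hδ0]
    have h3 : (k ≫ ((d T.obj₁).e ≫ lf₀)) ≫ s = (k ≫ lf) ≫ x.1 := by
      rw [← hcomm, ← hs']
      simp only [assoc]
    rw [h3, assoc, hx1, comp_zero]
  obtain ⟨t, ht⟩ : ∃ t : (d T.obj₃).P₀ ⟶ M, x.1 = m ≫ t :=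
    Triangle.yoneda_exact₂ _ hTCi x.1 hwx
  refine ⟨⟨(d T.obj₃).e ≫ t, ⟨t, rfl⟩⟩, ?_⟩
  refine Subtype.ext ?_
  show lg ≫ ((d T.obj₃).e ≫ t) = x.1
  rw [← assoc, ← hmdef, ht]

end Main

end WSAux

/-- Criteria for M ∈ C_{w≥0}: (i) ⟺ (ii) vanishing of all weight range ≤ -1 cohomological
functors at M; (i) ⟺ (iv) vanishing of (τ_{≤-1}H_M)(M). -/
theorem ge_iff_vanishing (w : WeightStructure C) (M : C) :
    (M ∈ w.ge ↔
      ∀ (H : Cᵒᵖ ⥤ AddCommGrpCat.{v}) [H.Additive], IsCohomological C H →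
        (∀ X : C, X ∈ w.ge → IsZero (H.obj (op X))) → IsZero (H.obj (op M))) ∧
    (M ∈ w.ge ↔
      ∀ (P₁ Q₁ : C) (a₁ : P₁ ⟶ M) (b₁ : M ⟶ Q₁) (c₁ : Q₁ ⟶ P₁⟦(1 : ℤ)⟧),
        Triangle.mk a₁ b₁ c₁ ∈ (distTriang C) →
        P₁⟦(1 : ℤ)⟧ ∈ w.le → Q₁ ∈ w.ge →
      ∀ (P₀ Q₀ : C) (a₀ : P₀ ⟶ M) (b₀ : M ⟶ Q₀) (c₀ : Q₀ ⟶ P₀⟦(1 : ℤ)⟧),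
        Triangle.mk a₀ b₀ c₀ ∈ (distTriang C) →
        P₀ ∈ w.le → Q₀⟦(-1 : ℤ)⟧ ∈ w.ge →
      ∀ (e : P₁ ⟶ P₀), e ≫ a₀ = a₁ →
        IsZero (image ((preadditiveYoneda.obj M).map e.op))) := by
  classical
  let d : ∀ N : C, WDecomp w N := fun N => (WSAux.wdecomp_exists w N).some
  have key : (d M).a₁ = 0 → M ∈ w.ge := fun ha =>
    w.ge_retract (WSAux.retract_of_mor₁_zero _ (d M).dist₁ ha) (d M).hQ₁
  constructor
  · constructor
    · intro hM H _ hcoh hvan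
      exact hvan M hM
    · intro h
      have hz := h (WSAux.TT w d M) (WSAux.TT_cohomological w d M)
        (fun X hX => WSAux.TT_vanish w d M hX)
      have hid : 𝟙 ((WSAux.TT w d M).obj (op M)) = 0 := hz.eq_of_src _ _
      have hz0 : (⟨(d M).a₁, ⟨(d M).a₀, (d M).he⟩⟩ : WSAux.SS w d M M) = 0 := by
        have := congrArg (fun (F : (WSAux.TT w d M).obj (op M) ⟶ (WSAux.TT w d M).obj (op M))
          => F ⟨(d M).a₁, ⟨(d M).a₀, (d M).he⟩⟩) hid
        exact this
      exact key (by simpa using congrArg Subtype.val hz0)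
  · constructor
    · intro hM P₁ Q₁ a₁ b₁ c₁ hT1 hP1 hQ1 P₀ Q₀ a₀ b₀ c₀ hT0 hP0 hQ0 e he
      have h : IsZero ((preadditiveYoneda.obj M).obj (op P₁)) := by
        refine @AddCommGrpCat.isZero_of_subsingleton _ ?_
        exact ⟨fun f g => by rw [WSAux.hom_zero₁ w hP1 hM f, WSAux.hom_zero₁ w hP1 hM g]⟩
      exact IsZero.of_mono (image.ι _) h
    · intro h
      have hz := h (d M).P₁ (d M).Q₁ (d M).a₁ (d M).b₁ (d M).c₁ (d M).dist₁ (d M).hP₁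
        (d M).hQ₁ (d M).P₀ (d M).Q₀ (d M).a₀ (d M).b₀ (d M).c₀ (d M).dist₀ (d M).hP₀
        (d M).hQ₀ (d M).e (d M).he
      have h0 : (preadditiveYoneda.obj M).map ((d M).e).op = 0 := by
        rw [← image.fac ((preadditiveYoneda.obj M).map ((d M).e).op),
          hz.eq_of_src (image.ι _) 0, comp_zero]
      have h1 := congrArg (fun (F : (preadditiveYoneda.obj M).obj (op (d M).P₀) ⟶
        (preadditiveYoneda.obj M).obj (op (d M).P₁)) => F (d M).a₀) h0
      have ha : (d M).a₁ = 0 := by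
        rw [← (d M).he]
        exact h1
      exact key ha
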